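/- Let R be a noetherian local ring with maximal ideal 𝔪, and let W_𝔪 be the set of centered valuations ν : R → ℝ ∪ {∞} normalized by 1, i.e., min{ν(a) : a ∈ 𝔪} = 1. Then W_𝔪 is closed in [0, ∞]^R with the product topology (where [0,∞] carries the order topology), and hence W_𝔪 is compact. -/

import Mathlib

open ENNReal

/-- A valuation on a commutative ring `R` with values in `[0, ∞] = ℝ≥0∞`. -/
def IsValuationE {R : Type*} [CommRing R] (f : R → ℝ≥0∞) : Prop :=
  (∀ a b : R, f (a * b) = f a + f b) ∧
  (∀ a b : R, min (f a) (f b) ≤ f (a + b)) ∧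
  f 1 = 0 ∧ f 0 = ⊤

lemma inf_le_of_mem_span {R : Type*} [CommRing R] {f : R → ℝ≥0∞} (hf : IsValuationE f)
    (s : Finset R) {a : R} (ha : a ∈ Ideal.span (s : Set R)) : s.inf f ≤ f a := by
  refine Submodule.span_induction (fun x hx => Finset.inf_le hx) ?_ ?_ ?_ ha
  · rw [hf.2.2.2]; exact le_top
  · exact fun x y _ _ hx hy => le_trans (le_min hx hy) (hf.2.1 x y)
  · intro r x _ hx
    rw [smul_eq_mul, hf.1 r x]
    exact le_trans hx le_add_self

lemma cont_finset_inf {R : Type*} (s : Finset R) :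
    Continuous (fun f : R → ℝ≥0∞ => s.inf f) := by
  classical
  induction s using Finset.induction with
  | empty => simpa using continuous_const
  | insert _ _ h ih =>
      simp only [Finset.inf_insert]
      exact Continuous.min (continuous_apply _) ih

set_option maxHeartbeats 1000000 in
theorem stmt19 {R : Type*} [CommRing R] [IsLocalRing R] [IsNoetherianRing R] :
    IsClosed {f : R → ℝ≥0∞ | IsValuationE f ∧
      (∀ a ∈ IsLocalRing.maximalIdeal R, 0 < f a) ∧
      IsLeast (f '' (IsLocalRing.maximalIdeal R : Set R)) 1} ∧
    IsCompact {f : R → ℝ≥0∞ | IsValuationE f ∧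
      (∀ a ∈ IsLocalRing.maximalIdeal R, 0 < f a) ∧
      IsLeast (f '' (IsLocalRing.maximalIdeal R : Set R)) 1} := by
  classical
  obtain ⟨s, hs⟩ := (IsNoetherian.noetherian (IsLocalRing.maximalIdeal R) : _)
  set 𝔪 := IsLocalRing.maximalIdeal R with h𝔪
  have hset : {f : R → ℝ≥0∞ | IsValuationE f ∧
      (∀ a ∈ 𝔪, 0 < f a) ∧ IsLeast (f '' (𝔪 : Set R)) 1}
      = {f : R → ℝ≥0∞ | IsValuationE f ∧ (∀ a ∈ 𝔪, 1 ≤ f a) ∧ s.inf f = 1} := by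
    ext f
    simp only [Set.mem_setOf_eq]
    constructor
    · rintro ⟨hv, hpos, ⟨⟨a, ha, hfa⟩, hlb⟩⟩
      refine ⟨hv, fun b hb => hlb ⟨b, hb, rfl⟩, le_antisymm ?_ ?_⟩
      · calc s.inf f ≤ f a := inf_le_of_mem_span hv s (show a ∈ Submodule.span R (↑s : Set R) by rw [hs]; exact ha)
          _ = 1 := hfa
      · exact Finset.le_inf fun i hi =>
          hlb ⟨i, by rw [← hs]; exact Submodule.subset_span hi, rfl⟩
    · rintro ⟨hv, hlb, hinf⟩
      have hne : s.Nonempty := by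
        rcases s.eq_empty_or_nonempty with h | h
        · rw [h] at hinf; simp at hinf
        · exact h
      obtain ⟨i, hi, hie⟩ := Finset.exists_mem_eq_inf s hne f
      have hiM : i ∈ 𝔪 := by rw [← hs]; exact Submodule.subset_span hi
      refine ⟨hv, fun a ha => lt_of_lt_of_le zero_lt_one (hlb a ha), ?_⟩
      · exact ⟨⟨i, hiM, by rw [← hie, hinf]⟩, by rintro x ⟨b, hb, rfl⟩; exact hlb b hb⟩
  rw [hset]
  have hclosed : IsClosed {f : R → ℝ≥0∞ | IsValuationE f ∧ (∀ a ∈ 𝔪, 1 ≤ f a) ∧ s.inf f = 1} := by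
    have : {f : R → ℝ≥0∞ | IsValuationE f ∧ (∀ a ∈ 𝔪, 1 ≤ f a) ∧ s.inf f = 1}
        = (⋂ a : R, ⋂ b : R, {f : R → ℝ≥0∞ | f (a * b) = f a + f b}) ∩
          (⋂ a : R, ⋂ b : R, {f : R → ℝ≥0∞ | min (f a) (f b) ≤ f (a + b)}) ∩
          {f : R → ℝ≥0∞ | f 1 = 0} ∩ {f : R → ℝ≥0∞ | f 0 = ⊤} ∩
          (⋂ a ∈ (𝔪 : Set R), {f : R → ℝ≥0∞ | 1 ≤ f a}) ∩
          {f : R → ℝ≥0∞ | s.inf f = 1} := by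
      ext f
      simp only [IsValuationE, Set.mem_inter_iff, Set.mem_iInter, Set.mem_setOf_eq, SetLike.mem_coe]
      tauto
    rw [this]
    have c1 : IsClosed (⋂ a : R, ⋂ b : R, {f : R → ℝ≥0∞ | f (a * b) = f a + f b}) :=
      isClosed_iInter fun a => isClosed_iInter fun b =>
        isClosed_eq (continuous_apply _) ((continuous_apply a).add (continuous_apply b))
    have c2 : IsClosed (⋂ a : R, ⋂ b : R, {f : R → ℝ≥0∞ | min (f a) (f b) ≤ f (a + b)}) :=
      isClosed_iInter fun a => isClosed_iInter fun b =>
        isClosed_le ((continuous_apply a).min (continuous_apply b)) (continuous_apply _)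
    have c3 : IsClosed {f : R → ℝ≥0∞ | f 1 = 0} :=
      isClosed_eq (continuous_apply _) continuous_const
    have c4 : IsClosed {f : R → ℝ≥0∞ | f 0 = ⊤} :=
      isClosed_eq (continuous_apply _) continuous_const
    have c5 : IsClosed (⋂ a ∈ (𝔪 : Set R), {f : R → ℝ≥0∞ | 1 ≤ f a}) :=
      isClosed_iInter fun a => isClosed_iInter fun _ =>
        isClosed_le continuous_const (continuous_apply a)
    have c6 : IsClosed {f : R → ℝ≥0∞ | s.inf f = 1} :=
      isClosed_eq (cont_finset_inf s) continuous_const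
    exact (((((c1.inter c2).inter c3).inter c4).inter c5).inter c6)
  exact ⟨hclosed, hclosed.isCompact⟩
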